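/- Let G be a connected mixed graph with at least one arc. Then the relation R on A(G) has exactly one equivalence class if and only if G has no frontier vertices, i.e. F(G) = ∅. -/

import Mathlib

/-- An A-trail (alternating trail) in the mixed graph `(V, A)`: a sequence of `k ≥ 1`
pairwise distinct arcs `a 0, …, a (k-1)` of `G` with a vertex sequence
`v 0, …, v k` such that the `i`-th arc is `(v i, v (i+1))` or `(v (i+1), v i)`,
and consecutive arcs alternate in direction. -/
def IsATrail {V : Type*} (A : V → V → Prop) (k : ℕ) (a : ℕ → V × V) (v : ℕ → V) : Prop :=
  1 ≤ k ∧
  (∀ i, i < k → A (a i).1 (a i).2) ∧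
  (∀ i, i < k → ∀ j, j < k → a i = a j → i = j) ∧
  (∀ i, i < k → a i = (v i, v (i + 1)) ∨ a i = (v (i + 1), v i)) ∧
  (∀ i, i + 1 < k → (a i = (v i, v (i + 1)) ↔ a (i + 1) = (v (i + 2), v (i + 1))))

/-- The relation `R` on arcs: `x R y` iff some A-trail has first arc `x` and last arc `y`. -/
def ATrailRel {V : Type*} (A : V → V → Prop) (x y : V × V) : Prop :=
  ∃ k a v, IsATrail A k a v ∧ a 0 = x ∧ a (k - 1) = y

/-- A frontier vertex: a vertex incident with two arcs lying in different classes of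
the equivalence relation `ATrailRel`. -/
def IsFrontier {V : Type*} (A : V → V → Prop) (w : V) : Prop :=
  ∃ x y : V × V, A x.1 x.2 ∧ A y.1 y.2 ∧ (x.1 = w ∨ x.2 = w) ∧ (y.1 = w ∨ y.2 = w) ∧
    ¬ ATrailRel A x y

/-- The underlying simple graph of a mixed graph. -/
def UnderGraph {V : Type*} (A : V → V → Prop) : SimpleGraph V where
  Adj u v := u ≠ v ∧ (A u v ∨ A v u)
  symm := ⟨by intro u v h; exact ⟨h.1.symm, h.2.symm⟩⟩
  loopless := ⟨fun v h => h.1 rfl⟩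

namespace ATwork

variable {V : Type*}

def entryV (s : (V × V) × Bool) : V := if s.2 = true then s.1.1 else s.1.2
def exitV (s : (V × V) × Bool) : V := if s.2 = true then s.1.2 else s.1.1

def Ok (A : V → V → Prop) (k : ℕ) (a : ℕ → V × V) (e : ℕ → Bool) : Prop :=
  1 ≤ k ∧ (∀ i, i < k → A (a i).1 (a i).2) ∧
  (∀ i, i < k → (a i).1 = (a i).2 → e i = true) ∧
  (∀ i, i + 1 < k → (e i = true ↔ (e (i + 1) = false ∨ (a (i + 1)).1 = (a (i + 1)).2))) ∧
  (∀ i, i + 1 < k → exitV (a i, e i) = entryV (a (i + 1), e (i + 1)))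

/-- From an A-trail, produce an Ok walk with the same arc sequence. -/
lemma ok_of_trail {A : V → V → Prop} {k a v} (h : IsATrail A k a v) :
    ∃ e, Ok A k a e := by
  classical
  obtain ⟨hk, hA, _, hor, halt⟩ := h
  refine ⟨fun i => decide (a i = (v i, v (i + 1))), hk, hA, ?_, ?_, ?_⟩
  · intro i hi hloop
    simp only [decide_eq_true_eq]
    rcases hor i hi with h1 | h1
    · exact h1
    · have : v (i + 1) = v i := by
        have h2 : (a i).1 = v (i + 1) := by rw [h1]
        have h3 : (a i).2 = v i := by rw [h1]
        rw [← h2, ← h3, hloop]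
      rw [h1, this]
  · intro i hi
    simp only [decide_eq_true_eq, decide_eq_false_iff_not]
    constructor
    · intro hP
      by_cases hP1 : a (i + 1) = (v (i + 1), v (i + 2))
      · -- P(i+1) and P'(i+1) both: loop
        right
        have hP' := (halt i hi).1 hP
        have e1 : (a (i+1)).1 = v (i+1) := by rw [hP1]
        have e2 : (a (i+1)).2 = v (i+2) := by rw [hP1]
        have e3 : (a (i+1)).1 = v (i+2) := by rw [hP']
        rw [e1, e2] at *
        rw [e1] at e3
        exact e3.symm ▸ (by rw [e2, ← e3])
      · exact Or.inl hP1
    · rintro (hP1 | hloop)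
      · -- ¬P(i+1), so P'(i+1) by hor, then halt backwards
        have hi1 : i + 1 < k := hi
        rcases hor (i + 1) hi1 with h1 | h1
        · exact absurd h1 hP1
        · exact (halt i hi).2 h1
      · -- a(i+1) loop: P'(i+1) holds
        rcases hor (i + 1) hi with h1 | h1
        · have e1 : v (i + 1) = (a (i+1)).1 := by rw [h1]
          have e2 : v (i + 2) = (a (i+1)).2 := by rw [h1]
          have : a (i + 1) = (v (i + 2), v (i + 1)) := by
            rw [h1, e1, e2, hloop]
          exact (halt i hi).2 this
        · exact (halt i hi).2 h1
  · intro i hi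
    have hi' : i < k := by omega
    simp only [exitV, entryV, decide_eq_true_eq]
    split_ifs with h1 h2 h2
    · -- P i, P (i+1)
      have e1 : (a i).2 = v (i + 1) := by rw [h1]
      have e2 : (a (i+1)).1 = v (i + 1) := by rw [h2]
      rw [e1, e2]
    · have e1 : (a i).2 = v (i + 1) := by rw [h1]
      rcases hor (i + 1) hi with h3 | h3
      · exact absurd h3 h2
      · have e2 : (a (i+1)).2 = v (i + 1) := by rw [h3]
        rw [e1, e2]
    · rcases hor i hi' with h3 | h3
      · exact absurd h3 h1
      · have e1 : (a i).1 = v (i + 1) := by rw [h3]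
        have e2 : (a (i+1)).1 = v (i + 1) := by rw [h2]
        rw [e1, e2]
    · rcases hor i hi' with h3 | h3
      · exact absurd h3 h1
      · rcases hor (i + 1) hi with h4 | h4
        · exact absurd h4 h2
        · have e1 : (a i).1 = v (i + 1) := by rw [h3]
          have e2 : (a (i+1)).2 = v (i + 1) := by rw [h4]
          rw [e1, e2]

/-- From an Ok walk with pairwise-distinct arcs, build an A-trail. -/
lemma trail_of_ok {A : V → V → Prop} {k a e} (h : Ok A k a e)
    (hinj : ∀ i, i < k → ∀ j, j < k → a i = a j → i = j) :
    ∃ v, IsATrail A k a v := by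
  classical
  obtain ⟨hk, hA, hgood, hC2, hC1⟩ := h
  set v : ℕ → V := fun i =>
    if i < k then entryV (a i, e i) else exitV (a (k - 1), e (k - 1)) with hv
  have hvlt : ∀ i, i < k → v i = entryV (a i, e i) := by
    intro i hi; simp [hv, hi]
  have hvk : v k = exitV (a (k - 1), e (k - 1)) := by simp [hv]
  -- claim1: e i = true → a i = (v i, v (i+1))
  have claim1 : ∀ i, i < k → e i = true → a i = (v i, v (i + 1)) := by
    intro i hi he
    have h1 : v i = (a i).1 := by rw [hvlt i hi]; simp [entryV, he]
    have h2 : v (i + 1) = (a i).2 := by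
      by_cases h' : i + 1 < k
      · rw [hvlt _ h', ← hC1 i h']; simp [exitV, he]
      · have : i = k - 1 := by omega
        rw [show i + 1 = k by omega, hvk, ← this]; simp [exitV, he]
    rw [h1, h2]
  have claim2 : ∀ i, i < k → e i = false → a i = (v (i + 1), v i) := by
    intro i hi he
    have h1 : v i = (a i).2 := by rw [hvlt i hi]; simp [entryV, he]
    have h2 : v (i + 1) = (a i).1 := by
      by_cases h' : i + 1 < k
      · rw [hvlt _ h', ← hC1 i h']; simp [exitV, he]
      · have : i = k - 1 := by omega
        rw [show i + 1 = k by omega, hvk, ← this]; simp [exitV, he]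
    rw [h1, h2]
  -- P i ↔ e i = true
  have claimP : ∀ i, i < k → (a i = (v i, v (i + 1)) ↔ e i = true) := by
    intro i hi
    constructor
    · intro hP
      by_contra he
      have he' : e i = false := by simpa using he
      have h2 := claim2 i hi he'
      have l1 : (a i).1 = v i := by rw [hP]
      have l2 : (a i).2 = v i := by rw [h2]
      exact he (hgood i hi (l1.trans l2.symm))
    · exact claim1 i hi
  have claimP' : ∀ i, i < k → (a i = (v (i + 1), v i) ↔ (e i = true → (a i).1 = (a i).2)) := by
    intro i hi
    constructor
    · intro hP' he
      have hP := claim1 i hi he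
      have l1 : (a i).1 = v i := by rw [hP]
      have l2 : (a i).2 = v i := by rw [hP']
      exact l1.trans l2.symm
    · intro himp
      cases he : e i with
      | false => exact claim2 i hi he
      | true =>
        have hloop := himp he
        have hP := claim1 i hi he
        have l1 : v i = v (i + 1) := by
          have e1 : (a i).1 = v i := by rw [hP]
          have e2 : (a i).2 = v (i + 1) := by rw [hP]
          rw [← e1, ← e2, hloop]
        rw [hP, l1]
  refine ⟨v, hk, hA, hinj, ?_, ?_⟩
  · intro i hi
    cases he : e i with
    | true => exact Or.inl (claim1 i hi he)
    | false => exact Or.inr (claim2 i hi he)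
  · intro i hi
    rw [claimP i (by omega), claimP' (i + 1) hi, hC2 i hi]
    constructor
    · rintro (h1 | h1) h2
      · rw [h1] at h2; exact absurd h2 (by simp)
      · exact h1
    · intro h1
      cases he : e (i + 1) with
      | false => exact Or.inl rfl
      | true => exact Or.inr (h1 he)

lemma rel_of_ok_inj {A : V → V → Prop} {k a e} (h : Ok A k a e)
    (hinj : ∀ i, i < k → ∀ j, j < k → a i = a j → i = j) :
    ATrailRel A (a 0) (a (k - 1)) := by
  obtain ⟨v, ht⟩ := trail_of_ok h hinj
  exact ⟨k, a, v, ht, rfl, rfl⟩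

/-- Splice: cut out `d` steps starting at position `m`, assuming the junction is OK. -/
lemma ok_splice {A : V → V → Prop} {k a e} (h : Ok A k a e) (m d : ℕ)
    (hd : 1 ≤ d) (hdk : d < k) (hm : m ≤ k - d)
    (hj : 1 ≤ m → m + d < k →
      (e (m - 1) = true ↔ (e (m + d) = false ∨ (a (m + d)).1 = (a (m + d)).2)) ∧
      exitV (a (m - 1), e (m - 1)) = entryV (a (m + d), e (m + d))) :
    Ok A (k - d) (fun t => if t < m then a t else a (t + d))
      (fun t => if t < m then e t else e (t + d)) := by
  obtain ⟨hk, hA, hgood, hC2, hC1⟩ := h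
  refine ⟨by omega, ?_, ?_, ?_, ?_⟩
  · intro i hi
    by_cases h' : i < m <;> simp only [h', if_true, if_false, if_pos, if_neg, not_false_iff] <;>
      [exact hA i (by omega); exact hA (i + d) (by omega)]
  · intro i hi
    by_cases h' : i < m <;> simp only [h', if_true, if_false] <;>
      [exact hgood i (by omega); exact hgood (i + d) (by omega)]
  · intro i hi
    by_cases h1 : i + 1 < m
    · simp only [h1, if_pos (by omega : i < m)]
      exact hC2 i (by omega)
    · by_cases h2 : i < m
      · -- i + 1 = m : junction
        have hm' : m = i + 1 := by omega
        simp only [h2, if_pos, if_neg (by omega : ¬ i + 1 < m)]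
        have := (hj (by omega) (by omega)).1
        rw [hm'] at this
        simpa using this
      · simp only [if_neg h2, if_neg (by omega : ¬ i + 1 < m)]
        have : i + 1 + d = i + d + 1 := by omega
        rw [this]
        exact hC2 (i + d) (by omega)
  · intro i hi
    by_cases h1 : i + 1 < m
    · simp only [h1, if_pos (by omega : i < m)]
      exact hC1 i (by omega)
    · by_cases h2 : i < m
      · have hm' : m = i + 1 := by omega
        simp only [h2, if_pos, if_neg (by omega : ¬ i + 1 < m)]
        have := (hj (by omega) (by omega)).2
        rw [hm'] at this
        simpa using this
      · simp only [if_neg h2, if_neg (by omega : ¬ i + 1 < m)]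
        have : i + 1 + d = i + d + 1 := by omega
        rw [this]
        exact hC1 (i + d) (by omega)

/-- If the walk has a repeated arc at i < j, it can be shortened keeping endpoints. -/
lemma ok_shorten {A : V → V → Prop} {k a e} (h : Ok A k a e) {i j : ℕ}
    (hij : i < j) (hjk : j < k) (hae : a i = a j) :
    ∃ k' a' e', Ok A k' a' e' ∧ k' < k ∧ a' 0 = a 0 ∧ a' (k' - 1) = a (k - 1) := by
  obtain ⟨hk, hA, hgood, hC2, hC1⟩ := h
  have hok : Ok A k a e := ⟨hk, hA, hgood, hC2, hC1⟩
  by_cases hee : e i = e j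
  · -- cut (i+1) .. j  : m = i+1, d = j - i
    refine ⟨k - (j - i), _, _, ok_splice hok (i + 1) (j - i) (by omega) (by omega) (by omega) ?_,
      by omega, ?_, ?_⟩
    · intro _ hlt
      have hm1 : i + 1 - 1 = i := by omega
      have hm2 : i + 1 + (j - i) = j + 1 := by omega
      rw [hm1, hm2]
      constructor
      · rw [hee]; exact hC2 j (by omega)
      · rw [show exitV (a i, e i) = exitV (a j, e j) by rw [hae, hee]]
        exact hC1 j (by omega)
    · simp [Nat.lt_irrefl]
    · by_cases hc : k - (j - i) - 1 < i + 1
      · have hj' : j = k - 1 := by omega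
        have : k - (j - i) - 1 = i := by omega
        simp only [this, if_pos (by omega : i < i + 1)]
        rw [hae, hj']
      · simp only [if_neg hc]
        congr 1
        omega
  · -- e i ≠ e j
    by_cases hi0 : i = 0
    · -- drop the first j steps : m = 0, d = j
      refine ⟨k - j, _, _, ok_splice hok 0 j (by omega) (by omega) (by omega) (by omega), by omega,
        ?_, ?_⟩
      · simp only [if_neg (by omega : ¬ (0:ℕ) < 0)]
        rw [Nat.zero_add, ← hae, hi0]
      · simp only [if_neg (by omega : ¬ k - j - 1 < 0)]
        congr 1
        omega
    · by_cases hj1 : j = k - 1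
      · -- truncate to first i+1 steps : m = i+1, d = k - 1 - i
        refine ⟨k - (k - 1 - i), _, _,
          ok_splice hok (i + 1) (k - 1 - i) (by omega) (by omega) (by omega)
            (by intro _ h'; omega), by omega, ?_, ?_⟩
        · simp [Nat.lt_irrefl]
        · have : k - (k - 1 - i) - 1 = i := by omega
          simp only [this, if_pos (by omega : i < i + 1)]
          rw [hae, hj1]
      · -- drop steps i .. j : m = i, d = j + 1 - i
        have hloopf : ¬ (a i).1 = (a i).2 := by
          intro hl
          have h1 := hgood i (by omega) hl
          have h2 := hgood j hjk (by rw [← hae]; exact hl)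
          rw [h1, h2] at hee; exact hee rfl
        refine ⟨k - (j + 1 - i), _, _,
          ok_splice hok i (j + 1 - i) (by omega) (by omega) (by omega) ?_, by omega, ?_, ?_⟩
        · intro hm1 hm2
          have hmd : i + (j + 1 - i) = j + 1 := by omega
          rw [hmd]
          have hei : e (i - 1) = true ↔ e i = false := by
            have := hC2 (i - 1) (by omega)
            rw [show i - 1 + 1 = i by omega] at this
            constructor
            · intro h'
              rcases this.1 h' with h'' | h''
              · exact h''
              · exact absurd h'' hloopf
            · intro h'; exact this.2 (Or.inl h')
          have hef : e j = true ↔ e i = false := by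
            cases hi : e i <;> cases hj' : e j <;> simp_all
          constructor
          · rw [hei, ← hef]
            exact hC2 j (by omega)
          · have v1 := hC1 (i - 1) (by omega)
            rw [show i - 1 + 1 = i by omega] at v1
            have v2 := hC1 j (by omega)
            rw [v1]
            rw [← v2]
            -- entryV (a i, e i) = exitV (a j, e j)
            simp only [entryV, exitV, ← hae]
            cases hi : e i <;> cases hj' : e j <;> simp_all
        · simp only [if_pos (by omega : 0 < i)]
        · have : k - (j + 1 - i) - 1 ≥ i := by omega
          simp only [if_neg (by omega : ¬ k - (j + 1 - i) - 1 < i)]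
          congr 1
          omega

/-- Extraction: every Ok walk contains an Ok walk with distinct arcs and same end arcs. -/
lemma ok_extract {A : V → V → Prop} :
    ∀ k, ∀ (a : ℕ → V × V) (e : ℕ → Bool), Ok A k a e →
      ∃ k' a' e', Ok A k' a' e' ∧
        (∀ i, i < k' → ∀ j, j < k' → a' i = a' j → i = j) ∧
        a' 0 = a 0 ∧ a' (k' - 1) = a (k - 1) := by
  intro k
  induction k using Nat.strong_induction_on with
  | _ k IH =>
    intro a e hok
    by_cases hinj : ∀ i, i < k → ∀ j, j < k → a i = a j → i = j
    · exact ⟨k, a, e, hok, hinj, rfl, rfl⟩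
    · push_neg at hinj
      obtain ⟨i, hi, j, hj, hae, hij⟩ := hinj
      have hsh : ∃ k' a' e', Ok A k' a' e' ∧ k' < k ∧ a' 0 = a 0 ∧ a' (k' - 1) = a (k - 1) := by
        rcases Nat.lt_or_ge i j with h' | h'
        · exact ok_shorten hok h' hj hae
        · exact ok_shorten hok (by omega : j < i) hi hae.symm
      obtain ⟨k', a', e', hok', hlt, h0, hl⟩ := hsh
      obtain ⟨k'', a'', e'', hok'', hinj'', h0'', hl''⟩ := IH k' hlt a' e' hok'
      exact ⟨k'', a'', e'', hok'', hinj'', h0''.trans h0, hl''.trans hl⟩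

lemma rel_of_ok {A : V → V → Prop} {k a e} (h : Ok A k a e) :
    ATrailRel A (a 0) (a (k - 1)) := by
  obtain ⟨k', a', e', hok', hinj', h0', hl'⟩ := ok_extract k a e h
  have := rel_of_ok_inj hok' hinj'
  rwa [h0', hl'] at this

lemma rel_refl {A : V → V → Prop} {x : V × V} (hx : A x.1 x.2) : ATrailRel A x x := by
  refine ⟨1, fun _ => x, fun i => if i = 0 then x.1 else x.2,
    ⟨le_refl 1, fun i _ => hx, fun i hi j hj _ => by omega, ?_, fun i hi => by omega⟩, rfl, rfl⟩
  intro i hi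
  have : i = 0 := by omega
  subst this
  left
  simp

lemma rel_trans {A : V → V → Prop} {x y z : V × V}
    (h1 : ATrailRel A x y) (h2 : ATrailRel A y z) : ATrailRel A x z := by
  obtain ⟨k, a, v, ht1, ha0, hak⟩ := h1
  obtain ⟨m, b, w, ht2, hb0, hbm⟩ := h2
  obtain ⟨e, hoka⟩ := ok_of_trail ht1
  obtain ⟨f, hokb⟩ := ok_of_trail ht2
  obtain ⟨hka, hAa, hgooda, hC2a, hC1a⟩ := hoka
  obtain ⟨hkb, hAb, hgoodb, hC2b, hC1b⟩ := hokb
  by_cases hk1 : k = 1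
  · have : x = y := by rw [← ha0, ← hak, hk1]
    rw [this]
    exact ⟨m, b, w, ht2, hb0, hbm⟩
  by_cases hm1 : m = 1
  · have : y = z := by rw [← hb0, ← hbm, hm1]
    exact ⟨k, a, v, ht1, ha0, by rw [hak, this]⟩
  have hk2 : 2 ≤ k := by omega
  have hm2 : 2 ≤ m := by omega
  have hyy : a (k - 1) = b 0 := by rw [hak, hb0]
  by_cases heq : e (k - 1) = f 0
  · -- overlap glue : length k + m - 1
    set K := k + m - 1 with hK
    set c : ℕ → V × V := fun t => if t < k then a t else b (t - k + 1) with hc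
    set g : ℕ → Bool := fun t => if t < k then e t else f (t - k + 1) with hg
    have hokc : Ok A K c g := by
      refine ⟨by omega, ?_, ?_, ?_, ?_⟩
      · intro t ht
        by_cases h' : t < k <;> simp only [hc, h', if_true, if_false]
        · exact hAa t h'
        · exact hAb (t - k + 1) (by omega)
      · intro t ht
        by_cases h' : t < k <;> simp only [hc, hg, h', if_true, if_false]
        · exact hgooda t h'
        · exact hgoodb (t - k + 1) (by omega)
      · intro t ht
        by_cases h1 : t + 1 < k
        · simp only [hc, hg, h1, if_pos (by omega : t < k)]
          exact hC2a t h1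
        · by_cases h2 : t < k
          · -- t = k - 1
            have htk : t = k - 1 := by omega
            simp only [hc, hg, h2, if_pos, if_neg h1]
            have e1 : t + 1 - k + 1 = 1 := by omega
            rw [e1, htk, heq]
            exact hC2b 0 (by omega)
          · simp only [hc, hg, if_neg h2, if_neg h1]
            have e1 : t + 1 - k + 1 = (t - k + 1) + 1 := by omega
            rw [e1]
            exact hC2b (t - k + 1) (by omega)
      · intro t ht
        by_cases h1 : t + 1 < k
        · simp only [hc, hg, h1, if_pos (by omega : t < k)]
          exact hC1a t h1
        · by_cases h2 : t < k
          · have htk : t = k - 1 := by omega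
            simp only [hc, hg, h2, if_pos, if_neg h1]
            have e1 : t + 1 - k + 1 = 1 := by omega
            rw [e1, htk, heq, hyy]
            exact hC1b 0 (by omega)
          · simp only [hc, hg, if_neg h2, if_neg h1]
            have e1 : t + 1 - k + 1 = (t - k + 1) + 1 := by omega
            rw [e1]
            exact hC1b (t - k + 1) (by omega)
    have hres := rel_of_ok hokc
    have hc0 : c 0 = x := by simp only [hc, if_pos (by omega : 0 < k)]; exact ha0
    have hcl : c (K - 1) = z := by
      simp only [hc, hK, if_neg (by omega : ¬ k + m - 1 - 1 < k)]
      rw [show k + m - 1 - 1 - k + 1 = m - 1 by omega]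
      exact hbm
    rwa [hc0, hcl] at hres
  · -- mismatch: drop arc y ; length k + m - 2
    have hloopy : ¬ (a (k - 1)).1 = (a (k - 1)).2 := by
      intro hl
      have e1 := hgooda (k - 1) (by omega) hl
      have e2 := hgoodb 0 (by omega) (by rw [← hyy]; exact hl)
      rw [e1, e2] at heq; exact heq rfl
    set K := k + m - 2 with hK
    set c : ℕ → V × V := fun t => if t < k - 1 then a t else b (t + 2 - k) with hc
    set g : ℕ → Bool := fun t => if t < k - 1 then e t else f (t + 2 - k) with hg
    have hokc : Ok A K c g := by
      refine ⟨by omega, ?_, ?_, ?_, ?_⟩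
      · intro t ht
        by_cases h' : t < k - 1 <;> simp only [hc, h', if_true, if_false]
        · exact hAa t (by omega)
        · exact hAb (t + 2 - k) (by omega)
      · intro t ht
        by_cases h' : t < k - 1 <;> simp only [hc, hg, h', if_true, if_false]
        · exact hgooda t (by omega)
        · exact hgoodb (t + 2 - k) (by omega)
      · intro t ht
        by_cases h1 : t + 1 < k - 1
        · simp only [hc, hg, h1, if_pos (by omega : t < k - 1)]
          exact hC2a t (by omega)
        · by_cases h2 : t < k - 1
          · -- junction : t = k - 2
            have htk : t = k - 2 := by omega
            simp only [hc, hg, h2, if_pos, if_neg h1]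
            have e1 : t + 1 + 2 - k = 1 := by omega
            rw [e1, htk]
            have hA1 : e (k - 2) = true ↔ e (k - 1) = false := by
              have := hC2a (k - 2) (by omega)
              rw [show k - 2 + 1 = k - 1 by omega] at this
              constructor
              · intro h'
                rcases this.1 h' with h'' | h''
                · exact h''
                · exact absurd h'' hloopy
              · intro h'; exact this.2 (Or.inl h')
            have hA2 : f 0 = true ↔ e (k - 1) = false := by
              cases hc1 : e (k - 1) <;> cases hc2 : f 0 <;> simp_all
            rw [hA1, ← hA2]
            exact hC2b 0 (by omega)
          · simp only [hc, hg, if_neg h2, if_neg h1]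
            have e1 : t + 1 + 2 - k = (t + 2 - k) + 1 := by omega
            rw [e1]
            exact hC2b (t + 2 - k) (by omega)
      · intro t ht
        by_cases h1 : t + 1 < k - 1
        · simp only [hc, hg, h1, if_pos (by omega : t < k - 1)]
          exact hC1a t (by omega)
        · by_cases h2 : t < k - 1
          · have htk : t = k - 2 := by omega
            simp only [hc, hg, h2, if_pos, if_neg h1]
            have e1 : t + 1 + 2 - k = 1 := by omega
            rw [e1, htk]
            have v1 := hC1a (k - 2) (by omega)
            rw [show k - 2 + 1 = k - 1 by omega] at v1
            have v2 := hC1b 0 (by omega)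
            rw [v1, ← v2]
            -- entryV (a (k-1), e (k-1)) = exitV (b 0, f 0)
            simp only [entryV, exitV, ← hyy]
            cases hc1 : e (k - 1) <;> cases hc2 : f 0 <;> simp_all
          · simp only [hc, hg, if_neg h2, if_neg h1]
            have e1 : t + 1 + 2 - k = (t + 2 - k) + 1 := by omega
            rw [e1]
            exact hC1b (t + 2 - k) (by omega)
    have hres := rel_of_ok hokc
    have hc0 : c 0 = x := by simp only [hc, if_pos (by omega : 0 < k - 1)]; exact ha0
    have hcl : c (K - 1) = z := by
      simp only [hc, hK, if_neg (by omega : ¬ k + m - 2 - 1 < k - 1)]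
      rw [show k + m - 2 - 1 + 2 - k = m - 1 by omega]
      exact hbm
    rwa [hc0, hcl] at hres

end ATwork

/-- for a connected mixed graph `G` with at least one arc, the relation
`R` has exactly one equivalence class iff `G` has no frontier vertices. -/
theorem stmt_12 {V : Type*} (A : V → V → Prop) (hconn : (UnderGraph A).Connected)
    (harc : ∃ u v, A u v) :
    (∀ x y : V × V, A x.1 x.2 → A y.1 y.2 → ATrailRel A x y) ↔
      (∀ w : V, ¬ IsFrontier A w) := by
  constructor
  · intro h w hf
    obtain ⟨x, y, hx, hy, _, _, hn⟩ := hf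
    exact hn (h x y hx hy)
  · intro hfr x y hx hy
    have nf : ∀ (u : V) (p q : V × V), A p.1 p.2 → A q.1 q.2 →
        (p.1 = u ∨ p.2 = u) → (q.1 = u ∨ q.2 = u) → ATrailRel A p q := by
      intro u p q hp hq hpu hqu
      by_contra hcon
      exact hfr u ⟨p, q, hp, hq, hpu, hqu, hcon⟩
    have main : ∀ (u t : V) (p : (UnderGraph A).Walk u t) (x q : V × V),
        A x.1 x.2 → A q.1 q.2 → (x.1 = u ∨ x.2 = u) → (q.1 = t ∨ q.2 = t) →
        ATrailRel A x q := by
      intro u t p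
      induction p with
      | nil => intro x q hx hq hxu hqt; exact nf _ x q hx hq hxu hqt
      | @cons u u' _ h p ih =>
        intro x q hx hq hxu hqt
        obtain ⟨-, hc | hc⟩ := (show u ≠ u' ∧ (A u u' ∨ A u' u) from h)
        · exact ATwork.rel_trans (nf u x (u, u') hx hc hxu (Or.inl rfl))
            (ih (u, u') q hc hq (Or.inr rfl) hqt)
        · exact ATwork.rel_trans (nf u x (u', u) hx hc hxu (Or.inr rfl))
            (ih (u', u) q hc hq (Or.inl rfl) hqt)
    obtain ⟨p⟩ := hconn.preconnected x.1 y.1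
    exact main x.1 y.1 p x y hx hy (Or.inl rfl) (Or.inl rfl)
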